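/- Let w₁, …, w_N be i.i.d. positive random variables and p̂_N = (1/N)·Σᵢ wᵢ. Then E[p̂_N^{-1}] ≤ E[w₁^{-1}]. -/

import Mathlib

open MeasureTheory ProbabilityTheory Finset

/-- independence gives product of lintegrals -/
lemma aux_lintegral_prod {Ω : Type*} [MeasurableSpace Ω] (μ : Measure Ω)
    [IsProbabilityMeasure μ] {ι : Type*} {f : ι → Ω → ENNReal} (hmeas : ∀ i, Measurable (f i))
    (hindep : iIndepFun f μ) (s : Finset ι) :
    ∫⁻ ω, ∏ i ∈ s, f i ω ∂μ = ∏ i ∈ s, ∫⁻ ω, f i ω ∂μ := by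
  classical
  induction s using Finset.induction with
  | empty => simp
  | insert i s hi ih =>
    have hInd : IndepFun (∏ j ∈ s, f j) (f i) μ :=
      hindep.indepFun_finsetProd_of_notMem hmeas hi
    have hprodmeas : Measurable (∏ j ∈ s, f j) := by
      simpa [Finset.prod_fn] using Finset.measurable_prod s (fun j _ => hmeas j)
    simp_rw [Finset.prod_insert hi]
    have := lintegral_mul_eq_lintegral_mul_lintegral_of_indepFun hprodmeas (hmeas i) hInd
    calc ∫⁻ ω, f i ω * ∏ j ∈ s, f j ω ∂μ
        = ∫⁻ ω, ((∏ j ∈ s, f j) * f i) ω ∂μ := by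
          refine lintegral_congr fun ω => ?_
          simp [mul_comm, Finset.prod_apply]
      _ = (∫⁻ ω, (∏ j ∈ s, f j) ω ∂μ) * ∫⁻ ω, f i ω ∂μ := this
      _ = (∏ j ∈ s, ∫⁻ ω, f j ω ∂μ) * ∫⁻ ω, f i ω ∂μ := by
          rw [show (∫⁻ ω, (∏ j ∈ s, f j) ω ∂μ) = ∫⁻ ω, ∏ j ∈ s, f j ω ∂μ from
            lintegral_congr fun ω => by simp [Finset.prod_apply], ih]
      _ = _ := by rw [mul_comm]

/-- Lyapunov: (∫ h^{1/N})^N ≤ ∫ h for probability measures. -/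
lemma aux_lyapunov {Ω : Type*} [MeasurableSpace Ω] (μ : Measure Ω) [IsProbabilityMeasure μ]
    (h : Ω → ENNReal) (hm : Measurable h) (N : ℕ) (hN : N ≠ 0) :
    (∫⁻ ω, h ω ^ ((N : ℝ)⁻¹) ∂μ) ^ (N : ℕ) ≤ ∫⁻ ω, h ω ∂μ := by
  rcases eq_or_lt_of_le (Nat.one_le_iff_ne_zero.2 hN) with h1 | h1
  · simp [← h1]
  · have hNlt : (1 : ℝ) < (N : ℝ) := by exact_mod_cast h1
    have hconj : (N : ℝ).HolderConjugate (Real.conjExponent N) :=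
      Real.HolderConjugate.conjExponent hNlt
    have hf : AEMeasurable (fun ω => h ω ^ ((N : ℝ)⁻¹)) μ :=
      (hm.pow_const _).aemeasurable
    have hg : AEMeasurable (fun _ : Ω => (1 : ENNReal)) μ := aemeasurable_const
    have H := ENNReal.lintegral_mul_le_Lp_mul_Lq μ hconj hf hg
    simp only [Pi.mul_apply, mul_one, ENNReal.one_rpow, lintegral_const, measure_univ,
      one_mul, one_div] at H
    have hNne : (N : ℝ) ≠ 0 := by positivity
    have hrw : ∀ ω, (h ω ^ ((N : ℝ)⁻¹)) ^ (N : ℝ) = h ω := by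
      intro ω
      rw [← ENNReal.rpow_mul, inv_mul_cancel₀ hNne, ENNReal.rpow_one]
    simp_rw [hrw] at H
    -- H : ∫⁻ h^{1/N} ≤ (∫⁻ h)^{1/N} * 1^{1/q}... check
    calc (∫⁻ ω, h ω ^ ((N : ℝ)⁻¹) ∂μ) ^ (N : ℕ)
        ≤ ((∫⁻ ω, h ω ∂μ) ^ ((N : ℝ)⁻¹)) ^ (N : ℕ) := by
          gcongr
      _ = ∫⁻ ω, h ω ∂μ := by
          rw [← ENNReal.rpow_natCast (_ ^ _), ← ENNReal.rpow_mul,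
            inv_mul_cancel₀ hNne, ENNReal.rpow_one]

theorem stmt_7 {Ω : Type*} [MeasurableSpace Ω] (μ : Measure Ω) [IsProbabilityMeasure μ]
    (N : ℕ) [NeZero N] (w : Fin N → Ω → ℝ)
    (hpos : ∀ i ω, 0 < w i ω) (hmeas : ∀ i, Measurable (w i))
    (hindep : iIndepFun w μ)
    (hident : ∀ i, Measure.map (w i) μ = Measure.map (w 0) μ) :
    ∫⁻ ω, ENNReal.ofReal ((N : ℝ)⁻¹ * ∑ i, w i ω)⁻¹ ∂μ ≤
      ∫⁻ ω, ENNReal.ofReal ((w 0 ω)⁻¹) ∂μ := by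
  have hNne : (N : ℝ) ≠ 0 := Nat.cast_ne_zero.2 (NeZero.ne N)
  set f : Fin N → Ω → ENNReal := fun i ω => ENNReal.ofReal (w i ω) ^ (-(N : ℝ)⁻¹) with hf
  have hφ : Measurable fun x : ℝ => ENNReal.ofReal x ^ (-(N : ℝ)⁻¹) :=
    (ENNReal.measurable_ofReal).pow_const _
  have hfmeas : ∀ i, Measurable (f i) := fun i => hφ.comp (hmeas i)
  have hfindep : iIndepFun f μ :=
    hindep.comp (fun _ x => ENNReal.ofReal x ^ (-(N : ℝ)⁻¹)) (fun _ => hφ)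
  -- pointwise AM-GM
  have hpt : ∀ ω, ENNReal.ofReal ((N : ℝ)⁻¹ * ∑ i, w i ω)⁻¹ ≤ ∏ i, f i ω := by
    intro ω
    have hamgm : ∏ i, (w i ω) ^ ((N : ℝ)⁻¹) ≤ ∑ i, (N : ℝ)⁻¹ * w i ω :=
      Real.geom_mean_le_arith_mean_weighted univ (fun _ => (N : ℝ)⁻¹) (fun i => w i ω)
        (fun _ _ => by positivity)
        (by simp [Finset.sum_const, Finset.card_univ, mul_inv_cancel₀ hNne])
        (fun i _ => (hpos i ω).le)
    have hsum : ∑ i, (N : ℝ)⁻¹ * w i ω = (N : ℝ)⁻¹ * ∑ i, w i ω := by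
      rw [Finset.mul_sum]
    have hprodpos : 0 < ∏ i, (w i ω) ^ ((N : ℝ)⁻¹) :=
      Finset.prod_pos fun i _ => Real.rpow_pos_of_pos (hpos i ω) _
    have hinv : ((N : ℝ)⁻¹ * ∑ i, w i ω)⁻¹ ≤ (∏ i, (w i ω) ^ ((N : ℝ)⁻¹))⁻¹ := by
      apply inv_anti₀ hprodpos
      rw [← hsum]; exact hamgm
    calc ENNReal.ofReal ((N : ℝ)⁻¹ * ∑ i, w i ω)⁻¹
        ≤ ENNReal.ofReal (∏ i, (w i ω) ^ ((N : ℝ)⁻¹))⁻¹ := ENNReal.ofReal_le_ofReal hinv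
      _ = ENNReal.ofReal (∏ i, (w i ω) ^ (-(N : ℝ)⁻¹)) := by
          rw [← Finset.prod_inv_distrib]
          congr 1
          exact Finset.prod_congr rfl fun i _ => by
            rw [← Real.rpow_neg (hpos i ω).le]
      _ = ∏ i, ENNReal.ofReal ((w i ω) ^ (-(N : ℝ)⁻¹)) :=
          ENNReal.ofReal_prod_of_nonneg fun i _ => (Real.rpow_pos_of_pos (hpos i ω) _).le
      _ = ∏ i, f i ω := Finset.prod_congr rfl fun i _ =>
          (ENNReal.ofReal_rpow_of_pos (hpos i ω)).symm
  calc ∫⁻ ω, ENNReal.ofReal ((N : ℝ)⁻¹ * ∑ i, w i ω)⁻¹ ∂μ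
      ≤ ∫⁻ ω, ∏ i, f i ω ∂μ := lintegral_mono hpt
    _ = ∏ i, ∫⁻ ω, f i ω ∂μ := aux_lintegral_prod μ hfmeas hfindep univ
    _ = ∏ _i : Fin N, ∫⁻ ω, f 0 ω ∂μ := by
        refine Finset.prod_congr rfl fun i _ => ?_
        rw [show (∫⁻ ω, f i ω ∂μ) = ∫⁻ x, ENNReal.ofReal x ^ (-(N : ℝ)⁻¹) ∂(Measure.map (w i) μ)
            from (lintegral_map hφ (hmeas i)).symm,
          hident i, lintegral_map hφ (hmeas 0)]
    _ = (∫⁻ ω, f 0 ω ∂μ) ^ (N : ℕ) := by simp [Finset.prod_const, Finset.card_univ]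
    _ ≤ ∫⁻ ω, ENNReal.ofReal ((w 0 ω)⁻¹) ∂μ := by
        have : ∀ ω, f 0 ω = (ENNReal.ofReal ((w 0 ω)⁻¹)) ^ ((N : ℝ)⁻¹) := by
          intro ω
          simp only [hf]
          rw [ENNReal.ofReal_inv_of_pos (hpos 0 ω), ← ENNReal.rpow_neg_one,
            ← ENNReal.rpow_mul]
          ring_nf
        simp_rw [this]
        exact aux_lyapunov μ _ ((ENNReal.measurable_ofReal.comp
          ((hmeas 0).inv)) ) N (NeZero.ne N)
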